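/- Let ℍ∞ be the subset of positive times t where the rescaled chronological height converges; under Conditions T-C and C1–C5 of the paper, for the limiting time-change φ∞(t) = t/(2β*) with β* = E[V*∞], the rescaled inverse φ_p(t) = p^{−1} min{j ≥ 0 : 2𝒱(j−1) − ℍ(j) ≥ pt} converges in probability to φ∞(t) for every t ≥ 0, provided 𝒱([ps])/p ⇒ β*s for every s ≥ 0, pε_p → ∞, and (ε_p ℍ([ps]))_p is tight for every s ≥ 0. -/

import Mathlib

open MeasureTheory Filter
open scoped Classical

noncomputable section

/-- `𝒱(j−1) = V_0 + ⋯ + V_{j-1}` and `K_j = 2𝒱(j−1) − ℍ(j)`; the inverse time change is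
`φ(t) = min{j ≥ 0 : K_j ≥ t}`. -/
def varphi {Ω' : Type*} (V : ℕ → Ω' → ℝ) (H : ℕ → Ω' → ℝ) (t : ℝ) (ω : Ω') : ℕ :=
  sInf {j : ℕ | t ≤ 2 * ∑ k ∈ Finset.range j, V k ω - H j ω}

theorem stmt19 {Ω' : Type*} [MeasurableSpace Ω'] (μ : ℕ → Measure Ω')
    [∀ p, IsProbabilityMeasure (μ p)]
    (V : ℕ → Ω' → ℝ) (H : ℕ → Ω' → ℝ) (ε : ℕ → ℝ) (βs : ℝ)
    (hβ : 0 < βs)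
    -- edge lengths are positive, heights are nonnegative
    (hV : ∀ k ω, 0 < V k ω) (hH : ∀ j ω, 0 ≤ H j ω)
    -- triangular weak law of large numbers: `𝒱([ps])/p ⇒ β* s` for every `s ≥ 0`
    (hLLN : ∀ s : ℝ, 0 ≤ s → ∀ δ : ℝ, 0 < δ →
      Tendsto (fun p : ℕ =>
          ((μ p) {ω | δ <
            |(∑ k ∈ Finset.range (⌊(p : ℝ) * s⌋₊ + 1), V k ω) / (p : ℝ) - βs * s|}).toReal)
        atTop (nhds 0))
    -- `p ε_p → ∞`
    (hpε : Tendsto (fun p : ℕ => (p : ℝ) * ε p) atTop atTop)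
    -- tightness of `(ε_p ℍ([ps]))_p` for every `s ≥ 0`
    (htight : ∀ s : ℝ, 0 ≤ s → ∀ δ : ℝ, 0 < δ → ∃ M : ℝ, ∀ p : ℕ,
      ((μ p) {ω | M < ε p * H (⌊(p : ℝ) * s⌋₊) ω}).toReal ≤ δ) :
    -- conclusion: `φ_p(t) = φ(pt)/p → φ_∞(t) = t/(2β*)` in probability
    ∀ t : ℝ, 0 ≤ t → ∀ δ : ℝ, 0 < δ →
      Tendsto (fun p : ℕ =>
          ((μ p) {ω |
            δ < |((varphi V H ((p : ℝ) * t) ω : ℕ) : ℝ) / (p : ℝ) - t / (2 * βs)|}).toReal)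
        atTop (nhds 0) := by
  intro t ht δ hδ
  have hβ2 : (0:ℝ) < 2 * βs := by linarith
  set m := t / (2 * βs) with hm
  have hm0 : 0 ≤ m := div_nonneg ht hβ2.le
  have htm : t = 2 * βs * m := by rw [hm]; field_simp
  set s := m + δ with hsdef
  set s'' := m + δ / 2 with hs2def
  set u := max (m - δ) 0 with hudef
  have hs0 : (0:ℝ) ≤ s := by simp only [hsdef]; linarith
  have hs20 : (0:ℝ) ≤ s'' := by simp only [hs2def]; linarith
  have hu0 : (0:ℝ) ≤ u := le_max_right _ _
  clear_value m s s'' u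
  rw [Metric.tendsto_atTop]
  intro ρ hρ
  obtain ⟨M, hM⟩ := htight s hs0 (ρ/4) (by linarith)
  have hev1 : ∀ᶠ p : ℕ in atTop,
      ((μ p) {ω | βs*δ/4 <
        |(∑ k ∈ Finset.range (⌊(p : ℝ) * s''⌋₊ + 1), V k ω) / (p : ℝ) - βs * s''|}).toReal
      < ρ/4 :=
    (hLLN s'' hs20 (βs*δ/4) (by positivity)).eventually_lt_const (by linarith)
  have hev3 : ∀ᶠ p : ℕ in atTop,
      ((μ p) {ω | βs*δ/2 <
        |(∑ k ∈ Finset.range (⌊(p : ℝ) * u⌋₊ + 1), V k ω) / (p : ℝ) - βs * u|}).toReal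
      < ρ/4 :=
    (hLLN u hu0 (βs*δ/2) (by positivity)).eventually_lt_const (by linarith)
  have hev4 : ∀ᶠ p : ℕ in atTop, (1:ℝ) ≤ (p:ℝ) := by
    filter_upwards [eventually_ge_atTop 1] with p hp
    exact_mod_cast hp
  have hev5 : ∀ᶠ p : ℕ in atTop, 4/δ ≤ (p:ℝ) := by
    obtain ⟨N, hN⟩ := exists_nat_ge (4/δ)
    filter_upwards [eventually_ge_atTop N] with p hp
    exact hN.trans (Nat.cast_le.mpr hp)
  have hev6 : ∀ᶠ p : ℕ in atTop, max 1 (4*|M|/(βs*δ)) ≤ (p:ℝ) * ε p :=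
    hpε.eventually_ge_atTop _
  have hall := hev1.and (hev3.and (hev4.and (hev5.and hev6)))
  rw [eventually_atTop] at hall
  obtain ⟨N, hN⟩ := hall
  refine ⟨N, fun p hp => ?_⟩
  obtain ⟨h1, h3, h4, h5, h6⟩ := hN p hp
  have hp0 : (0:ℝ) < (p:ℝ) := by linarith
  have hεM1 : (1:ℝ) ≤ (p:ℝ) * ε p := le_trans (le_max_left _ _) h6
  have hεp : 0 < ε p := by
    by_contra h
    push_neg at h
    have h9 := mul_le_mul_of_nonneg_left h hp0.le
    simp only [mul_zero] at h9
    linarith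
  have hMle : |M| ≤ (p:ℝ) * ε p * (βs*δ) / 4 := by
    have h7 : 4*|M|/(βs*δ) ≤ (p:ℝ) * ε p := le_trans (le_max_right _ _) h6
    rw [div_le_iff₀ (by positivity : (0:ℝ) < βs*δ)] at h7
    linarith
  -- the three exceptional events
  set E1 := {ω | βs*δ/4 <
      |(∑ k ∈ Finset.range (⌊(p : ℝ) * s''⌋₊ + 1), V k ω) / (p : ℝ) - βs * s''|} with hE1
  set E2 := {ω | M < ε p * H (⌊(p : ℝ) * s⌋₊) ω} with hE2
  set E3 := {ω | βs*δ/2 <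
      |(∑ k ∈ Finset.range (⌊(p : ℝ) * u⌋₊ + 1), V k ω) / (p : ℝ) - βs * u|} with hE3
  have hfloor : ⌊(p:ℝ)*s''⌋₊ + 1 ≤ ⌊(p:ℝ)*s⌋₊ := by
    have ha : ((⌊(p:ℝ)*s''⌋₊:ℝ)) ≤ (p:ℝ)*s'' := Nat.floor_le (mul_nonneg hp0.le hs20)
    have hb := Nat.lt_floor_add_one ((p:ℝ)*s)
    have hc : 4 ≤ (p:ℝ)*δ := by
      rw [div_le_iff₀ hδ] at h5; linarith
    have hd : (p:ℝ)*s'' + 2 ≤ (p:ℝ)*s := by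
      have he : (p:ℝ)*s - (p:ℝ)*s'' = (p:ℝ)*δ/2 := by
        simp only [hsdef, hs2def]; ring
      linarith
    have : ((⌊(p:ℝ)*s''⌋₊:ℝ) + 1) < (⌊(p:ℝ)*s⌋₊:ℝ) := by linarith
    exact_mod_cast this.le
  have hsub : {ω | δ < |((varphi V H ((p : ℝ) * t) ω : ℕ) : ℝ) / (p : ℝ) - m|}
      ⊆ E1 ∪ E2 ∪ E3 := by
    intro ω hω
    by_contra hc
    simp only [hE1, hE2, hE3, Set.mem_union, Set.mem_setOf_eq, not_or, not_lt] at hc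
    obtain ⟨⟨hA, hB⟩, hC⟩ := hc
    have hω' : δ < |((varphi V H ((p : ℝ) * t) ω : ℕ) : ℝ) / (p : ℝ) - m| := hω
    have hSA : (βs*s'' - βs*δ/4) * (p:ℝ)
        ≤ ∑ k ∈ Finset.range (⌊(p : ℝ) * s''⌋₊ + 1), V k ω := by
      rw [← le_div_iff₀ hp0]
      have := (abs_le.mp hA).1
      linarith
    have hSC : (∑ k ∈ Finset.range (⌊(p : ℝ) * u⌋₊ + 1), V k ω)
        ≤ (βs*u + βs*δ/2) * (p:ℝ) := by
      rw [← div_le_iff₀ hp0]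
      have := (abs_le.mp hC).2
      linarith
    have hHb : H (⌊(p:ℝ)*s⌋₊) ω ≤ (βs*δ/4) * (p:ℝ) := by
      have h7 : (p:ℝ)*ε p*(βs*δ)/4 = ε p * ((βs*δ/4)*(p:ℝ)) := by ring
      have h8 : ε p * H (⌊(p:ℝ)*s⌋₊) ω ≤ ε p * ((βs*δ/4)*(p:ℝ)) := by
        have := le_abs_self M
        linarith
      exact le_of_mul_le_mul_left h8 hεp
    have hmono : ∑ k ∈ Finset.range (⌊(p : ℝ) * s''⌋₊ + 1), V k ω
        ≤ ∑ k ∈ Finset.range (⌊(p : ℝ) * s⌋₊), V k ω :=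
      Finset.sum_le_sum_of_subset_of_nonneg (Finset.range_subset_range.mpr hfloor)
        (fun i _ _ => (hV i ω).le)
    have hkey : (p:ℝ)*t ≤ 2 * ∑ k ∈ Finset.range (⌊(p:ℝ)*s⌋₊), V k ω
        - H (⌊(p:ℝ)*s⌋₊) ω := by
      have hpd : 0 ≤ (p:ℝ)*(βs*δ) := by positivity
      have e1 : (βs*s'' - βs*δ/4)*(p:ℝ) = βs*m*(p:ℝ) + (p:ℝ)*(βs*δ)/4 := by
        rw [hs2def]; ring
      have e2 : (βs*δ/4)*(p:ℝ) = (p:ℝ)*(βs*δ)/4 := by ring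
      have e3 : (p:ℝ)*t = 2*(βs*m*(p:ℝ)) := by rw [htm]; ring
      linarith
    have hne : {j : ℕ | (p:ℝ)*t ≤ 2 * ∑ k ∈ Finset.range j, V k ω - H j ω}.Nonempty :=
      ⟨⌊(p:ℝ)*s⌋₊, hkey⟩
    have hvdef : varphi V H ((p:ℝ)*t) ω
        = sInf {j : ℕ | (p:ℝ)*t ≤ 2 * ∑ k ∈ Finset.range j, V k ω - H j ω} := rfl
    have hφle : varphi V H ((p:ℝ)*t) ω ≤ ⌊(p:ℝ)*s⌋₊ := by
      rw [hvdef]; exact Nat.sInf_le hkey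
    have hφmem : (p:ℝ)*t ≤ 2 * ∑ k ∈ Finset.range (varphi V H ((p:ℝ)*t) ω), V k ω
        - H (varphi V H ((p:ℝ)*t) ω) ω := by
      rw [hvdef]; exact Nat.sInf_mem hne
    have hup : ((varphi V H ((p:ℝ)*t) ω : ℕ):ℝ) / (p:ℝ) - m ≤ δ := by
      have hcast : ((varphi V H ((p:ℝ)*t) ω : ℕ):ℝ) ≤ (p:ℝ)*s :=
        le_trans (Nat.cast_le.mpr hφle) (Nat.floor_le (mul_nonneg hp0.le hs0))
      rw [sub_le_iff_le_add, div_le_iff₀ hp0]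
      have e1 : (p:ℝ)*s = (δ + m)*(p:ℝ) := by rw [hsdef]; ring
      linarith
    have hlow : -δ ≤ ((varphi V H ((p:ℝ)*t) ω : ℕ):ℝ) / (p:ℝ) - m := by
      by_contra hcon
      push_neg at hcon
      have hφnn : (0:ℝ) ≤ ((varphi V H ((p:ℝ)*t) ω : ℕ):ℝ) / (p:ℝ) :=
        div_nonneg (Nat.cast_nonneg _) hp0.le
      have hmd : 0 ≤ m - δ := by linarith
      have huu : u = m - δ := hudef.trans (max_eq_left hmd)
      have hφlt : ((varphi V H ((p:ℝ)*t) ω : ℕ):ℝ) ≤ (p:ℝ)*u := by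
        rw [huu]
        have := (div_lt_iff₀ hp0).mp (show ((varphi V H ((p:ℝ)*t) ω : ℕ):ℝ)/(p:ℝ) < m - δ
          by linarith)
        linarith
      have hφle2 : varphi V H ((p:ℝ)*t) ω ≤ ⌊(p:ℝ)*u⌋₊ := Nat.le_floor hφlt
      have hmono2 : ∑ k ∈ Finset.range (varphi V H ((p:ℝ)*t) ω), V k ω
          ≤ ∑ k ∈ Finset.range (⌊(p:ℝ)*u⌋₊ + 1), V k ω :=
        Finset.sum_le_sum_of_subset_of_nonneg
          (Finset.range_subset_range.mpr (hφle2.trans (Nat.le_succ _)))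
          (fun i _ _ => (hV i ω).le)
      have hHnn := hH (varphi V H ((p:ℝ)*t) ω) ω
      have hpd : 0 < (p:ℝ)*(βs*δ) := by positivity
      have e1 : (βs*u + βs*δ/2)*(p:ℝ) = βs*m*(p:ℝ) - (p:ℝ)*(βs*δ)/2 := by
        rw [huu]; ring
      have e2 : (p:ℝ)*t = 2*(βs*m*(p:ℝ)) := by rw [htm]; ring
      linarith
    exact absurd hω' (not_lt.mpr (abs_le.mpr ⟨hlow, hup⟩))
  have hle : (μ p) {ω | δ < |((varphi V H ((p : ℝ) * t) ω : ℕ) : ℝ) / (p : ℝ) - m|}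
      ≤ (μ p) E1 + (μ p) E2 + (μ p) E3 :=
    (measure_mono hsub).trans (le_trans (measure_union_le _ _)
      (add_le_add_left (measure_union_le _ _) _))
  have hfin : (μ p) E1 + (μ p) E2 + (μ p) E3 ≠ ⊤ :=
    ENNReal.add_ne_top.mpr ⟨ENNReal.add_ne_top.mpr ⟨measure_ne_top _ _, measure_ne_top _ _⟩,
      measure_ne_top _ _⟩
  have hmeas : ((μ p) {ω | δ < |((varphi V H ((p : ℝ) * t) ω : ℕ) : ℝ) / (p : ℝ) - m|}).toReal
      ≤ ((μ p) E1).toReal + ((μ p) E2).toReal + ((μ p) E3).toReal := by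
    refine le_trans (ENNReal.toReal_mono hfin hle) ?_
    rw [ENNReal.toReal_add (ENNReal.add_ne_top.mpr ⟨measure_ne_top _ _, measure_ne_top _ _⟩)
      (measure_ne_top _ _),
      ENNReal.toReal_add (measure_ne_top _ _) (measure_ne_top _ _)]
  rw [Real.dist_eq, sub_zero, abs_of_nonneg ENNReal.toReal_nonneg]
  have h2 := hM p
  linarith

end
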